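/- The Minkowski pairing of the origin with its translate records the translation distance: if r ≠ 0, then for J = diag(1,1,1,−1) and e₄ = (0,0,0,1), one has e₄ᵀ · J · (exp(M) · e₄) = −cosh(r). -/

import Mathlib

set_option maxHeartbeats 1000000


open Matrix

noncomputable def lorentzBoostGen (dx dy dz : ℝ) : Matrix (Fin 4) (Fin 4) ℝ :=
  !![0, 0, 0, dx;
     0, 0, 0, dy;
     0, 0, 0, dz;
     dx, dy, dz, 0]

lemma lorentzBoostGen_pow_three (dx dy dz : ℝ) :
    lorentzBoostGen dx dy dz ^ 3 = (dx ^ 2 + dy ^ 2 + dz ^ 2) • lorentzBoostGen dx dy dz := by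
  have h : lorentzBoostGen dx dy dz ^ 3 =
      lorentzBoostGen dx dy dz * lorentzBoostGen dx dy dz * lorentzBoostGen dx dy dz := by
    rw [pow_succ, pow_two]
  rw [h]
  ext i j
  fin_cases i <;> fin_cases j <;>
    simp [lorentzBoostGen, Matrix.mul_apply, Fin.sum_univ_succ] <;>
    (try (left; ring)) <;> (try ring)

lemma lorentzBoostGen_pow_odd (dx dy dz : ℝ) (k : ℕ) :
    lorentzBoostGen dx dy dz ^ (2 * k + 1) =
      ((dx ^ 2 + dy ^ 2 + dz ^ 2) ^ k) • lorentzBoostGen dx dy dz := by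
  induction k with
  | zero => simp
  | succ n ih =>
    have h1 : 2 * (n + 1) + 1 = (2 * n + 1) + 2 := by ring
    rw [h1, pow_add, ih, smul_mul_assoc, ← pow_succ']
    norm_num
    rw [lorentzBoostGen_pow_three, smul_smul, ← pow_succ]

lemma lorentzBoostGen_pow_even (dx dy dz : ℝ) (k : ℕ) :
    lorentzBoostGen dx dy dz ^ (2 * (k + 1)) =
      ((dx ^ 2 + dy ^ 2 + dz ^ 2) ^ k) • lorentzBoostGen dx dy dz ^ 2 := by
  have h1 : 2 * (k + 1) = (2 * k + 1) + 1 := by ring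
  rw [h1, pow_succ, lorentzBoostGen_pow_odd, smul_mul_assoc, ← pow_two]

lemma exp_lorentzBoostGen (dx dy dz : ℝ)
    (hs : dx ^ 2 + dy ^ 2 + dz ^ 2 ≠ 0) :
    NormedSpace.exp (lorentzBoostGen dx dy dz) =
      1 + (Real.sinh (Real.sqrt (dx ^ 2 + dy ^ 2 + dz ^ 2)) /
          Real.sqrt (dx ^ 2 + dy ^ 2 + dz ^ 2)) • lorentzBoostGen dx dy dz +
        ((Real.cosh (Real.sqrt (dx ^ 2 + dy ^ 2 + dz ^ 2)) - 1) /
          (dx ^ 2 + dy ^ 2 + dz ^ 2)) • lorentzBoostGen dx dy dz ^ 2 := by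
  set s := dx ^ 2 + dy ^ 2 + dz ^ 2 with hs_def
  set r := Real.sqrt s with hr_def
  set M := lorentzBoostGen dx dy dz with hM_def
  have hs0 : 0 ≤ s := by positivity
  have hr2 : r ^ 2 = s := Real.sq_sqrt hs0
  have hr0 : r ≠ 0 := by
    intro h
    exact hs (by rw [← hr2, h]; ring)
  have hrpow : ∀ k : ℕ, r ^ (2 * k) = s ^ k := fun k => by
    rw [pow_mul, hr2]
  rw [NormedSpace.exp_eq_tsum (𝕂 := ℝ)]
  refine HasSum.tsum_eq ?_
  have heven : HasSum (fun k : ℕ => (((2 * k).factorial : ℝ)⁻¹ • M ^ (2 * k)))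
      (1 + ((Real.cosh r - 1) / s) • M ^ 2) := by
    have h1 : HasSum (fun k : ℕ => r ^ (2 * k) / (2 * k).factorial) (Real.cosh r) :=
      Real.hasSum_cosh r
    have h2 : HasSum (fun k : ℕ => r ^ (2 * (k + 1)) / (2 * (k + 1)).factorial)
        (Real.cosh r - 1) := by
      have hc : HasSum (fun k : ℕ => r ^ (2 * k) / (2 * k).factorial)
          ((Real.cosh r - 1) + ∑ i ∈ Finset.range 1, r ^ (2 * i) / (2 * i).factorial) := by
        simpa [Finset.sum_range_one] using h1
      exact (hasSum_nat_add_iff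
        (f := fun k : ℕ => r ^ (2 * k) / (2 * k).factorial) 1).mpr hc
    have h3 : HasSum (fun k : ℕ => (r ^ (2 * (k + 1)) / (2 * (k + 1)).factorial / s) • M ^ 2)
        (((Real.cosh r - 1) / s) • M ^ 2) := (h2.div_const s).smul_const (M ^ 2)
    have h4 : HasSum (fun k : ℕ => (((2 * (k + 1)).factorial : ℝ)⁻¹ • M ^ (2 * (k + 1))))
        (((Real.cosh r - 1) / s) • M ^ 2) := by
      have heq : (fun k : ℕ => (((2 * (k + 1)).factorial : ℝ)⁻¹ • M ^ (2 * (k + 1)))) =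
          fun k : ℕ => (r ^ (2 * (k + 1)) / (2 * (k + 1)).factorial / s) • M ^ 2 := by
        funext k
        rw [lorentzBoostGen_pow_even, ← hs_def, smul_smul]
        congr 1
        have hrk : r ^ (2 * (k + 1)) = s ^ k * s := by
          rw [hrpow, pow_succ]
        rw [hrk]
        have hfac : ((2 * (k + 1)).factorial : ℝ) ≠ 0 := by positivity
        field_simp
      rw [heq]
      exact h3
    have h5 := (hasSum_nat_add_iff
      (f := fun k : ℕ => (((2 * k).factorial : ℝ)⁻¹ • M ^ (2 * k))) 1).mp h4
    simpa [Finset.sum_range_one, add_comm] using h5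
  have hodd : HasSum (fun k : ℕ => (((2 * k + 1).factorial : ℝ)⁻¹ • M ^ (2 * k + 1)))
      ((Real.sinh r / r) • M) := by
    have h1 : HasSum (fun k : ℕ => r ^ (2 * k + 1) / (2 * k + 1).factorial) (Real.sinh r) :=
      Real.hasSum_sinh r
    have h3 : HasSum (fun k : ℕ => (r ^ (2 * k + 1) / (2 * k + 1).factorial / r) • M)
        ((Real.sinh r / r) • M) := (h1.div_const r).smul_const M
    have heq : (fun k : ℕ => (((2 * k + 1).factorial : ℝ)⁻¹ • M ^ (2 * k + 1))) =
        fun k : ℕ => (r ^ (2 * k + 1) / (2 * k + 1).factorial / r) • M := by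
      funext k
      rw [lorentzBoostGen_pow_odd, ← hs_def, smul_smul]
      congr 1
      have hrk : r ^ (2 * k + 1) = s ^ k * r := by
        rw [pow_succ, hrpow]
      rw [hrk]
      have hfac : ((2 * k + 1).factorial : ℝ) ≠ 0 := by positivity
      field_simp
    rw [heq]
    exact h3
  have key : HasSum (fun n : ℕ => ((n.factorial : ℝ)⁻¹ • M ^ n))
      ((1 + ((Real.cosh r - 1) / s) • M ^ 2) + (Real.sinh r / r) • M) :=
    HasSum.even_add_odd (f := fun n : ℕ => ((n.factorial : ℝ)⁻¹ • M ^ n)) heven hodd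
  have hcomm : (1 : Matrix (Fin 4) (Fin 4) ℝ) + (Real.sinh r / r) • M +
      ((Real.cosh r - 1) / s) • M ^ 2 =
      1 + ((Real.cosh r - 1) / s) • M ^ 2 + (Real.sinh r / r) • M := by abel
  rw [hcomm]
  exact key

theorem stmt_10 (dx dy dz : ℝ) (hr : Real.sqrt (dx ^ 2 + dy ^ 2 + dz ^ 2) ≠ 0) :
    ![0, 0, 0, 1] ⬝ᵥ
        (Matrix.diagonal ![1, 1, 1, -1] *ᵥ
          (NormedSpace.exp (lorentzBoostGen dx dy dz) *ᵥ ![0, 0, 0, 1])) =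
      -Real.cosh (Real.sqrt (dx ^ 2 + dy ^ 2 + dz ^ 2)) := by
  have hs : dx ^ 2 + dy ^ 2 + dz ^ 2 ≠ 0 := by
    intro h
    exact hr (by rw [h, Real.sqrt_zero])
  rw [exp_lorentzBoostGen dx dy dz hs]
  have h2 : lorentzBoostGen dx dy dz ^ 2 =
      lorentzBoostGen dx dy dz * lorentzBoostGen dx dy dz := sq _
  have h33 : (!![(0:ℝ), 0, 0, dx; 0, 0, 0, dy; 0, 0, 0, dz; dx, dy, dz, 0] ^ 2) 3 3 =
      dx ^ 2 + dy ^ 2 + dz ^ 2 := by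
    rw [pow_two]
    simp [Matrix.mul_apply, Fin.sum_univ_succ]
    ring
  simp [h2, lorentzBoostGen, Matrix.mulVec, dotProduct, Fin.sum_univ_four,
    Matrix.mul_apply, Matrix.diagonal]
  rw [h33]
  field_simp
  ring
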